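/- For n ≥ 5, eqdim(T_n) = 2n. -/

import Mathlib

/-- `S` is a distance-equalizer set of `G`. -/
def IsDistEqSet {V : Type*} (G : SimpleGraph V) (S : Set V) : Prop :=
  ∀ u v : V, u ∉ S → v ∉ S → u ≠ v → ∃ x ∈ S, G.dist u x = G.dist v x

/-- The equidistant dimension of `G`. -/
noncomputable def eqdim {V : Type*} (G : SimpleGraph V) : ℕ :=
  sInf {k | ∃ S : Finset V, IsDistEqSet G ↑S ∧ S.card = k}

/-- The convex polytope graph `T_n` on vertex layers a=0, b=1, c=2, d=3. -/
def TGraph (n : ℕ) : SimpleGraph (Fin 4 × ZMod n) :=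
  SimpleGraph.fromRel (fun x y =>
    (x.1 = y.1 ∧ y.2 = x.2 + 1) ∨
    (x.1 = 0 ∧ y.1 = 1 ∧ y.2 = x.2) ∨
    (x.1 = 1 ∧ y.1 = 2 ∧ y.2 = x.2) ∨
    (x.1 = 2 ∧ y.1 = 3 ∧ y.2 = x.2) ∨
    (x.1 = 0 ∧ y.1 = 1 ∧ x.2 = y.2 + 1) ∨
    (x.1 = 2 ∧ y.1 = 3 ∧ y.2 = x.2 + 1))


open SimpleGraph

namespace TTn

def f (a b n m : ℕ) : ℕ :=
  match a, b with
  | 0,0 => min m (n-m)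
  | 0,1 => min (m+1) (n-m)
  | 0,2 => min (m+2) (n+1-m)
  | 0,3 => min (max m 1 + 2) (n+2-m)
  | 1,0 => min (max m 1) (n+1-m)
  | 1,1 => min m (n-m)
  | 1,2 => min (m+1) (n+1-m)
  | 1,3 => min (max m 1 + 1) (n+2-m)
  | 2,0 => min (max m 1 + 1) (n+2-m)
  | 2,1 => min (m+1) (n+1-m)
  | 2,2 => min m (n-m)
  | 2,3 => min (max m 1) (n+1-m)
  | 3,0 => min (max m 1 + 2) (n+2-m)
  | 3,1 => min (m+2) (n+1-m)
  | 3,2 => min (m+1) (n-m)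
  | _,_ => min m (n-m)

@[simp] lemma f00 (n m : ℕ) : f 0 0 n m = min m (n-m) := rfl
@[simp] lemma f01 (n m : ℕ) : f 0 1 n m = min (m+1) (n-m) := rfl
@[simp] lemma f02 (n m : ℕ) : f 0 2 n m = min (m+2) (n+1-m) := rfl
@[simp] lemma f03 (n m : ℕ) : f 0 3 n m = min (max m 1 + 2) (n+2-m) := rfl
@[simp] lemma f10 (n m : ℕ) : f 1 0 n m = min (max m 1) (n+1-m) := rfl
@[simp] lemma f11 (n m : ℕ) : f 1 1 n m = min m (n-m) := rfl
@[simp] lemma f12 (n m : ℕ) : f 1 2 n m = min (m+1) (n+1-m) := rfl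
@[simp] lemma f13 (n m : ℕ) : f 1 3 n m = min (max m 1 + 1) (n+2-m) := rfl
@[simp] lemma f20 (n m : ℕ) : f 2 0 n m = min (max m 1 + 1) (n+2-m) := rfl
@[simp] lemma f21 (n m : ℕ) : f 2 1 n m = min (m+1) (n+1-m) := rfl
@[simp] lemma f22 (n m : ℕ) : f 2 2 n m = min m (n-m) := rfl
@[simp] lemma f23 (n m : ℕ) : f 2 3 n m = min (max m 1) (n+1-m) := rfl
@[simp] lemma f30 (n m : ℕ) : f 3 0 n m = min (max m 1 + 2) (n+2-m) := rfl
@[simp] lemma f31 (n m : ℕ) : f 3 1 n m = min (m+2) (n+1-m) := rfl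
@[simp] lemma f32 (n m : ℕ) : f 3 2 n m = min (m+1) (n-m) := rfl
@[simp] lemma f33 (n m : ℕ) : f 3 3 n m = min m (n-m) := rfl

@[simp] lemma val0 : (0 : Fin 4).val = 0 := rfl
@[simp] lemma val1 : (1 : Fin 4).val = 1 := rfl
@[simp] lemma val2 : (2 : Fin 4).val = 2 := rfl
@[simp] lemma val3 : (3 : Fin 4).val = 3 := rfl

def F (n : ℕ) (u v : Fin 4 × ZMod n) : ℕ := f u.1.val v.1.val n ((v.2 - u.2).val)

lemma ringL {a b n m m' : ℕ} (ha : a < 4) (hb : b < 4) (hn : 5 ≤ n) (hm : m < n) (hm' : m' < n)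
    (hrel : m' = m + 1 ∨ (m = n - 1 ∧ m' = 0)) :
    f a b n m ≤ f a b n m' + 1 ∧ f a b n m' ≤ f a b n m + 1 := by
  interval_cases a <;> interval_cases b <;> simp <;> omega

lemma vertL {a b n m : ℕ} (ha : a < 4) (hb : b < 3) (hn : 5 ≤ n) (hm : m < n) :
    f a b n m ≤ f a (b+1) n m + 1 ∧ f a (b+1) n m ≤ f a b n m + 1 := by
  interval_cases a <;> interval_cases b <;> simp <;> omega

lemma diag01L {a n m m' : ℕ} (ha : a < 4) (hn : 5 ≤ n) (hm : m < n) (hm' : m' < n)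
    (hrel : m' = m + 1 ∨ (m = n - 1 ∧ m' = 0)) :
    f a 0 n m' ≤ f a 1 n m + 1 ∧ f a 1 n m ≤ f a 0 n m' + 1 := by
  interval_cases a <;> simp <;> omega

lemma diag23L {a n m m' : ℕ} (ha : a < 4) (hn : 5 ≤ n) (hm : m < n) (hm' : m' < n)
    (hrel : m' = m + 1 ∨ (m = n - 1 ∧ m' = 0)) :
    f a 3 n m' ≤ f a 2 n m + 1 ∧ f a 2 n m ≤ f a 3 n m' + 1 := by
  interval_cases a <;> simp <;> omega

variable {n : ℕ}

lemma val_lt' (hn : 5 ≤ n) (x : ZMod n) : x.val < n := by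
  haveI : NeZero n := ⟨by omega⟩; exact ZMod.val_lt x

lemma val_add_nat (hn : 5 ≤ n) (x : ZMod n) (c : ℕ) :
    (x + (c : ZMod n)).val = (x.val + c) % n := by
  haveI : NeZero n := ⟨by omega⟩
  rw [ZMod.val_add, ZMod.val_natCast, Nat.add_mod x.val c, Nat.mod_eq_of_lt (ZMod.val_lt x)]

lemma succ_val (hn : 5 ≤ n) (x : ZMod n) :
    ((x + 1).val = x.val + 1 ∧ x.val + 1 < n) ∨ (x.val = n - 1 ∧ (x + 1).val = 0) := by
  haveI : NeZero n := ⟨by omega⟩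
  have h1 : (x + 1).val = (x.val + 1) % n := by
    rw [show (1 : ZMod n) = ((1:ℕ) : ZMod n) by push_cast; ring, val_add_nat hn]
  have hx := ZMod.val_lt x
  rcases Nat.lt_or_ge (x.val + 1) n with h | h
  · left; rw [Nat.mod_eq_of_lt h] at h1; exact ⟨h1, h⟩
  · right
    have hx1 : x.val = n - 1 := by omega
    rw [h1, hx1]; constructor; · rfl
    · rw [show n - 1 + 1 = n by omega, Nat.mod_self]

lemma pred_val (hn : 5 ≤ n) (x : ZMod n) :
    ((x - 1).val = x.val - 1 ∧ 1 ≤ x.val) ∨ (x.val = 0 ∧ (x - 1).val = n - 1) := by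
  haveI : NeZero n := ⟨by omega⟩
  rcases succ_val hn (x - 1) with ⟨h1, h2⟩ | ⟨h1, h2⟩
  · rw [sub_add_cancel] at h1; omega
  · rw [sub_add_cancel] at h2; omega

lemma sub_val (hn : 5 ≤ n) (x y : ZMod n) : (x - y).val = (x.val + (n - y.val)) % n := by
  haveI : NeZero n := ⟨by omega⟩
  have h : x - y = x + (((n - y.val : ℕ)) : ZMod n) := by
    have : ((n - y.val : ℕ) : ZMod n) = (n : ZMod n) - (y.val : ZMod n) := by
      push_cast [Nat.cast_sub (le_of_lt (ZMod.val_lt y))]; ring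
    rw [this, ZMod.natCast_self, ZMod.natCast_val, ZMod.cast_id]; ring
  rw [h, val_add_nat hn]

lemma mod_small_or {a : ℕ} (hn : 5 ≤ n) (h : a < 2 * n) :
    (a % n = a ∧ a < n) ∨ (a % n + n = a) := by
  rcases Nat.lt_or_ge a n with h1 | h1
  · left; exact ⟨Nat.mod_eq_of_lt h1, h1⟩
  · right; rw [Nat.mod_eq_sub_mod h1, Nat.mod_eq_of_lt (by omega)]; omega

lemma ne_succ (hn : 5 ≤ n) (i : ZMod n) : i ≠ i + 1 := by
  haveI : Fact (1 < n) := ⟨by omega⟩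
  intro h; nth_rewrite 1 [show i = i + 0 by ring] at h
  exact one_ne_zero (add_left_cancel h).symm

lemma adj_ring (hn : 5 ≤ n) (l : Fin 4) (i : ZMod n) : (TGraph n).Adj (l, i) (l, i + 1) := by
  rw [TGraph, SimpleGraph.fromRel_adj]
  exact ⟨fun h => ne_succ hn i (congrArg Prod.snd h), Or.inl (Or.inl ⟨rfl, rfl⟩)⟩

lemma adj_ring' (hn : 5 ≤ n) (l : Fin 4) (i : ZMod n) : (TGraph n).Adj (l, i) (l, i - 1) := by
  have := (adj_ring hn l (i - 1)).symm
  rwa [sub_add_cancel] at this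

lemma adj01 (hn : 5 ≤ n) (i : ZMod n) : (TGraph n).Adj (0, i) (1, i) := by
  rw [TGraph, SimpleGraph.fromRel_adj]
  exact ⟨by simp [Prod.ext_iff], Or.inl (Or.inr (Or.inl ⟨rfl, rfl, rfl⟩))⟩

lemma adj12 (hn : 5 ≤ n) (i : ZMod n) : (TGraph n).Adj (1, i) (2, i) := by
  rw [TGraph, SimpleGraph.fromRel_adj]
  exact ⟨by simp [Prod.ext_iff], Or.inl (Or.inr (Or.inr (Or.inl ⟨rfl, rfl, rfl⟩)))⟩

lemma adj23 (hn : 5 ≤ n) (i : ZMod n) : (TGraph n).Adj (2, i) (3, i) := by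
  rw [TGraph, SimpleGraph.fromRel_adj]
  exact ⟨by simp [Prod.ext_iff], Or.inl (Or.inr (Or.inr (Or.inr (Or.inl ⟨rfl, rfl, rfl⟩))))⟩

lemma adj01' (hn : 5 ≤ n) (i : ZMod n) : (TGraph n).Adj (0, i + 1) (1, i) := by
  rw [TGraph, SimpleGraph.fromRel_adj]
  exact ⟨by simp [Prod.ext_iff],
    Or.inl (Or.inr (Or.inr (Or.inr (Or.inr (Or.inl ⟨rfl, rfl, rfl⟩)))))⟩

lemma adj23' (hn : 5 ≤ n) (i : ZMod n) : (TGraph n).Adj (2, i) (3, i + 1) := by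
  rw [TGraph, SimpleGraph.fromRel_adj]
  exact ⟨by simp [Prod.ext_iff], Or.inl (Or.inr (Or.inr (Or.inr (Or.inr (Or.inr ⟨rfl, rfl, rfl⟩)))))⟩

lemma adj01'' (hn : 5 ≤ n) (i : ZMod n) : (TGraph n).Adj (0, i) (1, i - 1) := by
  have := adj01' hn (i - 1); rwa [sub_add_cancel] at this

lemma adj23'' (hn : 5 ≤ n) (i : ZMod n) : (TGraph n).Adj (3, i) (2, i - 1) := by
  have := (adj23' hn (i - 1)).symm; rwa [sub_add_cancel] at this

lemma lip (hn : 5 ≤ n) (u v w : Fin 4 × ZMod n) (h : (TGraph n).Adj v w) :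
    F n u v ≤ F n u w + 1 := by
  haveI : NeZero n := ⟨by omega⟩
  rw [TGraph, SimpleGraph.fromRel_adj] at h
  obtain ⟨a, i⟩ := u; obtain ⟨b, j⟩ := v; obtain ⟨c, k⟩ := w
  obtain ⟨hnevw, h | h⟩ := h <;> dsimp only at h <;>
    simp only [F] <;>
    [rcases h with ⟨h1, h2⟩ | ⟨h1, h2, h3⟩ | ⟨h1, h2, h3⟩ | ⟨h1, h2, h3⟩ | ⟨h1, h2, h3⟩ | ⟨h1, h2, h3⟩;
     rcases h with ⟨h1, h2⟩ | ⟨h1, h2, h3⟩ | ⟨h1, h2, h3⟩ | ⟨h1, h2, h3⟩ | ⟨h1, h2, h3⟩ | ⟨h1, h2, h3⟩]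
  -- fwd ring : b = c, k = j + 1
  · subst h1; subst h2
    rw [show j + 1 - i = (j - i) + 1 from by ring]
    exact (ringL a.isLt b.isLt hn (val_lt' hn _) (val_lt' hn _)
      ((succ_val hn (j - i)).imp And.left id)).1
  -- fwd vert 0-1
  · subst h1; subst h2; subst h3
    exact (vertL (b := 0) a.isLt (by omega) hn (val_lt' hn _)).1
  -- fwd vert 1-2
  · subst h1; subst h2; subst h3
    exact (vertL (b := 1) a.isLt (by omega) hn (val_lt' hn _)).1
  -- fwd vert 2-3
  · subst h1; subst h2; subst h3
    exact (vertL (b := 2) a.isLt (by omega) hn (val_lt' hn _)).1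
  -- fwd diag 0-1 : b=0, c=1, j = k + 1
  · subst h1; subst h2; subst h3
    rw [show k + 1 - i = (k - i) + 1 from by ring]
    exact (diag01L a.isLt hn (val_lt' hn _) (val_lt' hn _)
      ((succ_val hn (k - i)).imp And.left id)).1
  -- fwd diag 2-3 : b=2, c=3, k = j + 1
  · subst h1; subst h2; subst h3
    rw [show j + 1 - i = (j - i) + 1 from by ring]
    exact (diag23L a.isLt hn (val_lt' hn _) (val_lt' hn _)
      ((succ_val hn (j - i)).imp And.left id)).2
  -- bwd ring : c = b, j = k + 1
  · subst h1; subst h2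
    rw [show k + 1 - i = (k - i) + 1 from by ring]
    exact (ringL a.isLt c.isLt hn (val_lt' hn _) (val_lt' hn _)
      ((succ_val hn (k - i)).imp And.left id)).2
  -- bwd vert : c=0, b=1, j = k
  · subst h1; subst h2; subst h3
    exact (vertL (b := 0) a.isLt (by omega) hn (val_lt' hn _)).2
  · subst h1; subst h2; subst h3
    exact (vertL (b := 1) a.isLt (by omega) hn (val_lt' hn _)).2
  · subst h1; subst h2; subst h3
    exact (vertL (b := 2) a.isLt (by omega) hn (val_lt' hn _)).2
  -- bwd diag 0-1 : c=0, b=1, k = j + 1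
  · subst h1; subst h2; subst h3
    rw [show j + 1 - i = (j - i) + 1 from by ring]
    exact (diag01L a.isLt hn (val_lt' hn _) (val_lt' hn _)
      ((succ_val hn (j - i)).imp And.left id)).2
  -- bwd diag 2-3 : c=2, b=3, j = k + 1
  · subst h1; subst h2; subst h3
    rw [show k + 1 - i = (k - i) + 1 from by ring]
    exact (diag23L a.isLt hn (val_lt' hn _) (val_lt' hn _)
      ((succ_val hn (k - i)).imp And.left id)).1

lemma descent (hn : 5 ≤ n) (u v : Fin 4 × ZMod n) (hne : u ≠ v) :
    ∃ w, (TGraph n).Adj v w ∧ F n u w + 1 = F n u v := by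
  haveI : NeZero n := ⟨by omega⟩
  obtain ⟨a, i⟩ := u; obtain ⟨b, j⟩ := v
  have quad : ∀ x : Fin 4, x = 0 ∨ x = 1 ∨ x = 2 ∨ x = 3 := by decide
  have hm := val_lt' hn (j - i)
  rcases quad a with rfl | rfl | rfl | rfl <;> rcases quad b with rfl | rfl | rfl | rfl
  -- (0,0)
  · have hji : j ≠ i := fun h => hne (by rw [h])
    have hm0 : (j - i).val ≠ 0 := fun h0 => hji (sub_eq_zero.mp ((ZMod.val_eq_zero _).mp h0))
    rcases le_or_gt ((j - i).val) (n - (j - i).val) with hc | hc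
    · refine ⟨(0, j - 1), adj_ring' hn 0 j, ?_⟩
      simp only [F, val0, val1, val2, val3, f00, f01, f02, f03, f10, f11, f12, f13, f20, f21, f22, f23, f30, f31, f32, f33]
      rw [show j - 1 - i = (j - i) - 1 from by ring]
      rcases pred_val hn (j - i) with ⟨h1, h2⟩ | ⟨h1, h2⟩ <;> omega
    · refine ⟨(0, j + 1), adj_ring hn 0 j, ?_⟩
      simp only [F, val0, val1, val2, val3, f00, f01, f02, f03, f10, f11, f12, f13, f20, f21, f22, f23, f30, f31, f32, f33]
      rw [show j + 1 - i = (j - i) + 1 from by ring]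
      rcases succ_val hn (j - i) with ⟨h1, h2⟩ | ⟨h1, h2⟩ <;> omega
  -- (0,1)
  · rcases le_or_gt ((j - i).val + 1) (n - (j - i).val) with hc | hc
    · exact ⟨(0, j), (adj01 hn j).symm, by simp only [F, val0, val1, val2, val3, f00, f01, f02, f03, f10, f11, f12, f13, f20, f21, f22, f23, f30, f31, f32, f33]; omega⟩
    · refine ⟨(0, j + 1), (adj01' hn j).symm, ?_⟩
      simp only [F, val0, val1, val2, val3, f00, f01, f02, f03, f10, f11, f12, f13, f20, f21, f22, f23, f30, f31, f32, f33]
      rw [show j + 1 - i = (j - i) + 1 from by ring]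
      rcases succ_val hn (j - i) with ⟨h1, h2⟩ | ⟨h1, h2⟩ <;> omega
  -- (0,2)
  · exact ⟨(1, j), (adj12 hn j).symm, by simp only [F, val0, val1, val2, val3, f00, f01, f02, f03, f10, f11, f12, f13, f20, f21, f22, f23, f30, f31, f32, f33]; omega⟩
  -- (0,3)
  · rcases eq_or_ne ((j - i).val) 0 with hm0 | hm0
    · exact ⟨(2, j), (adj23 hn j).symm, by simp only [F, val0, val1, val2, val3, f00, f01, f02, f03, f10, f11, f12, f13, f20, f21, f22, f23, f30, f31, f32, f33]; omega⟩
    · rcases le_or_gt (max ((j - i).val) 1 + 2) (n + 2 - (j - i).val) with hc | hc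
      · refine ⟨(2, j - 1), adj23'' hn j, ?_⟩
        simp only [F, val0, val1, val2, val3, f00, f01, f02, f03, f10, f11, f12, f13, f20, f21, f22, f23, f30, f31, f32, f33]
        rw [show j - 1 - i = (j - i) - 1 from by ring]
        rcases pred_val hn (j - i) with ⟨h1, h2⟩ | ⟨h1, h2⟩ <;> omega
      · exact ⟨(2, j), (adj23 hn j).symm, by simp only [F, val0, val1, val2, val3, f00, f01, f02, f03, f10, f11, f12, f13, f20, f21, f22, f23, f30, f31, f32, f33]; omega⟩
  -- (1,0)
  · rcases eq_or_ne ((j - i).val) 0 with hm0 | hm0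
    · exact ⟨(1, j), adj01 hn j, by simp only [F, val0, val1, val2, val3, f00, f01, f02, f03, f10, f11, f12, f13, f20, f21, f22, f23, f30, f31, f32, f33]; omega⟩
    · rcases le_or_gt ((j - i).val) (n + 1 - (j - i).val) with hc | hc
      · refine ⟨(1, j - 1), adj01'' hn j, ?_⟩
        simp only [F, val0, val1, val2, val3, f00, f01, f02, f03, f10, f11, f12, f13, f20, f21, f22, f23, f30, f31, f32, f33]
        rw [show j - 1 - i = (j - i) - 1 from by ring]
        rcases pred_val hn (j - i) with ⟨h1, h2⟩ | ⟨h1, h2⟩ <;> omega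
      · refine ⟨(0, j + 1), adj_ring hn 0 j, ?_⟩
        simp only [F, val0, val1, val2, val3, f00, f01, f02, f03, f10, f11, f12, f13, f20, f21, f22, f23, f30, f31, f32, f33]
        rw [show j + 1 - i = (j - i) + 1 from by ring]
        rcases succ_val hn (j - i) with ⟨h1, h2⟩ | ⟨h1, h2⟩ <;> omega
  -- (1,1)
  · have hji : j ≠ i := fun h => hne (by rw [h])
    have hm0 : (j - i).val ≠ 0 := fun h0 => hji (sub_eq_zero.mp ((ZMod.val_eq_zero _).mp h0))
    rcases le_or_gt ((j - i).val) (n - (j - i).val) with hc | hc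
    · refine ⟨(1, j - 1), adj_ring' hn 1 j, ?_⟩
      simp only [F, val0, val1, val2, val3, f00, f01, f02, f03, f10, f11, f12, f13, f20, f21, f22, f23, f30, f31, f32, f33]
      rw [show j - 1 - i = (j - i) - 1 from by ring]
      rcases pred_val hn (j - i) with ⟨h1, h2⟩ | ⟨h1, h2⟩ <;> omega
    · refine ⟨(1, j + 1), adj_ring hn 1 j, ?_⟩
      simp only [F, val0, val1, val2, val3, f00, f01, f02, f03, f10, f11, f12, f13, f20, f21, f22, f23, f30, f31, f32, f33]
      rw [show j + 1 - i = (j - i) + 1 from by ring]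
      rcases succ_val hn (j - i) with ⟨h1, h2⟩ | ⟨h1, h2⟩ <;> omega
  -- (1,2)
  · exact ⟨(1, j), (adj12 hn j).symm, by simp only [F, val0, val1, val2, val3, f00, f01, f02, f03, f10, f11, f12, f13, f20, f21, f22, f23, f30, f31, f32, f33]; omega⟩
  -- (1,3)
  · rcases eq_or_ne ((j - i).val) 0 with hm0 | hm0
    · exact ⟨(2, j), (adj23 hn j).symm, by simp only [F, val0, val1, val2, val3, f00, f01, f02, f03, f10, f11, f12, f13, f20, f21, f22, f23, f30, f31, f32, f33]; omega⟩
    · rcases le_or_gt (max ((j - i).val) 1 + 1) (n + 2 - (j - i).val) with hc | hc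
      · refine ⟨(2, j - 1), adj23'' hn j, ?_⟩
        simp only [F, val0, val1, val2, val3, f00, f01, f02, f03, f10, f11, f12, f13, f20, f21, f22, f23, f30, f31, f32, f33]
        rw [show j - 1 - i = (j - i) - 1 from by ring]
        rcases pred_val hn (j - i) with ⟨h1, h2⟩ | ⟨h1, h2⟩ <;> omega
      · exact ⟨(2, j), (adj23 hn j).symm, by simp only [F, val0, val1, val2, val3, f00, f01, f02, f03, f10, f11, f12, f13, f20, f21, f22, f23, f30, f31, f32, f33]; omega⟩
  -- (2,0)
  · rcases eq_or_ne ((j - i).val) 0 with hm0 | hm0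
    · exact ⟨(1, j), adj01 hn j, by simp only [F, val0, val1, val2, val3, f00, f01, f02, f03, f10, f11, f12, f13, f20, f21, f22, f23, f30, f31, f32, f33]; omega⟩
    · rcases le_or_gt (max ((j - i).val) 1 + 1) (n + 2 - (j - i).val) with hc | hc
      · refine ⟨(1, j - 1), adj01'' hn j, ?_⟩
        simp only [F, val0, val1, val2, val3, f00, f01, f02, f03, f10, f11, f12, f13, f20, f21, f22, f23, f30, f31, f32, f33]
        rw [show j - 1 - i = (j - i) - 1 from by ring]
        rcases pred_val hn (j - i) with ⟨h1, h2⟩ | ⟨h1, h2⟩ <;> omega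
      · exact ⟨(1, j), adj01 hn j, by simp only [F, val0, val1, val2, val3, f00, f01, f02, f03, f10, f11, f12, f13, f20, f21, f22, f23, f30, f31, f32, f33]; omega⟩
  -- (2,1)
  · exact ⟨(2, j), adj12 hn j, by simp only [F, val0, val1, val2, val3, f00, f01, f02, f03, f10, f11, f12, f13, f20, f21, f22, f23, f30, f31, f32, f33]; omega⟩
  -- (2,2)
  · have hji : j ≠ i := fun h => hne (by rw [h])
    have hm0 : (j - i).val ≠ 0 := fun h0 => hji (sub_eq_zero.mp ((ZMod.val_eq_zero _).mp h0))
    rcases le_or_gt ((j - i).val) (n - (j - i).val) with hc | hc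
    · refine ⟨(2, j - 1), adj_ring' hn 2 j, ?_⟩
      simp only [F, val0, val1, val2, val3, f00, f01, f02, f03, f10, f11, f12, f13, f20, f21, f22, f23, f30, f31, f32, f33]
      rw [show j - 1 - i = (j - i) - 1 from by ring]
      rcases pred_val hn (j - i) with ⟨h1, h2⟩ | ⟨h1, h2⟩ <;> omega
    · refine ⟨(2, j + 1), adj_ring hn 2 j, ?_⟩
      simp only [F, val0, val1, val2, val3, f00, f01, f02, f03, f10, f11, f12, f13, f20, f21, f22, f23, f30, f31, f32, f33]
      rw [show j + 1 - i = (j - i) + 1 from by ring]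
      rcases succ_val hn (j - i) with ⟨h1, h2⟩ | ⟨h1, h2⟩ <;> omega
  -- (2,3)
  · rcases eq_or_ne ((j - i).val) 0 with hm0 | hm0
    · exact ⟨(2, j), (adj23 hn j).symm, by simp only [F, val0, val1, val2, val3, f00, f01, f02, f03, f10, f11, f12, f13, f20, f21, f22, f23, f30, f31, f32, f33]; omega⟩
    · rcases le_or_gt ((j - i).val) (n + 1 - (j - i).val) with hc | hc
      · refine ⟨(2, j - 1), adj23'' hn j, ?_⟩
        simp only [F, val0, val1, val2, val3, f00, f01, f02, f03, f10, f11, f12, f13, f20, f21, f22, f23, f30, f31, f32, f33]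
        rw [show j - 1 - i = (j - i) - 1 from by ring]
        rcases pred_val hn (j - i) with ⟨h1, h2⟩ | ⟨h1, h2⟩ <;> omega
      · refine ⟨(3, j + 1), adj_ring hn 3 j, ?_⟩
        simp only [F, val0, val1, val2, val3, f00, f01, f02, f03, f10, f11, f12, f13, f20, f21, f22, f23, f30, f31, f32, f33]
        rw [show j + 1 - i = (j - i) + 1 from by ring]
        rcases succ_val hn (j - i) with ⟨h1, h2⟩ | ⟨h1, h2⟩ <;> omega
  -- (3,0)
  · rcases eq_or_ne ((j - i).val) 0 with hm0 | hm0
    · exact ⟨(1, j), adj01 hn j, by simp only [F, val0, val1, val2, val3, f00, f01, f02, f03, f10, f11, f12, f13, f20, f21, f22, f23, f30, f31, f32, f33]; omega⟩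
    · rcases le_or_gt (max ((j - i).val) 1 + 2) (n + 2 - (j - i).val) with hc | hc
      · refine ⟨(1, j - 1), adj01'' hn j, ?_⟩
        simp only [F, val0, val1, val2, val3, f00, f01, f02, f03, f10, f11, f12, f13, f20, f21, f22, f23, f30, f31, f32, f33]
        rw [show j - 1 - i = (j - i) - 1 from by ring]
        rcases pred_val hn (j - i) with ⟨h1, h2⟩ | ⟨h1, h2⟩ <;> omega
      · exact ⟨(1, j), adj01 hn j, by simp only [F, val0, val1, val2, val3, f00, f01, f02, f03, f10, f11, f12, f13, f20, f21, f22, f23, f30, f31, f32, f33]; omega⟩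
  -- (3,1)
  · exact ⟨(2, j), adj12 hn j, by simp only [F, val0, val1, val2, val3, f00, f01, f02, f03, f10, f11, f12, f13, f20, f21, f22, f23, f30, f31, f32, f33]; omega⟩
  -- (3,2)
  · rcases le_or_gt ((j - i).val + 1) (n - (j - i).val) with hc | hc
    · exact ⟨(3, j), adj23 hn j, by simp only [F, val0, val1, val2, val3, f00, f01, f02, f03, f10, f11, f12, f13, f20, f21, f22, f23, f30, f31, f32, f33]; omega⟩
    · refine ⟨(3, j + 1), adj23' hn j, ?_⟩
      simp only [F, val0, val1, val2, val3, f00, f01, f02, f03, f10, f11, f12, f13, f20, f21, f22, f23, f30, f31, f32, f33]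
      rw [show j + 1 - i = (j - i) + 1 from by ring]
      rcases succ_val hn (j - i) with ⟨h1, h2⟩ | ⟨h1, h2⟩ <;> omega
  -- (3,3)
  · have hji : j ≠ i := fun h => hne (by rw [h])
    have hm0 : (j - i).val ≠ 0 := fun h0 => hji (sub_eq_zero.mp ((ZMod.val_eq_zero _).mp h0))
    rcases le_or_gt ((j - i).val) (n - (j - i).val) with hc | hc
    · refine ⟨(3, j - 1), adj_ring' hn 3 j, ?_⟩
      simp only [F, val0, val1, val2, val3, f00, f01, f02, f03, f10, f11, f12, f13, f20, f21, f22, f23, f30, f31, f32, f33]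
      rw [show j - 1 - i = (j - i) - 1 from by ring]
      rcases pred_val hn (j - i) with ⟨h1, h2⟩ | ⟨h1, h2⟩ <;> omega
    · refine ⟨(3, j + 1), adj_ring hn 3 j, ?_⟩
      simp only [F, val0, val1, val2, val3, f00, f01, f02, f03, f10, f11, f12, f13, f20, f21, f22, f23, f30, f31, f32, f33]
      rw [show j + 1 - i = (j - i) + 1 from by ring]
      rcases succ_val hn (j - i) with ⟨h1, h2⟩ | ⟨h1, h2⟩ <;> omega

lemma F_self (hn : 5 ≤ n) (u : Fin 4 × ZMod n) : F n u u = 0 := by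
  haveI : NeZero n := ⟨by omega⟩
  obtain ⟨a, i⟩ := u
  have quad : ∀ x : Fin 4, x = 0 ∨ x = 1 ∨ x = 2 ∨ x = 3 := by decide
  rcases quad a with rfl | rfl | rfl | rfl <;>
    simp [F, val0, val1, val2, val3, f00, f01, f02, f03, f10, f11, f12, f13, f20, f21, f22, f23, f30, f31, f32, f33]

lemma F_eq_zero (hn : 5 ≤ n) {u v : Fin 4 × ZMod n} (h : F n u v = 0) : u = v := by
  haveI : NeZero n := ⟨by omega⟩
  obtain ⟨a, i⟩ := u; obtain ⟨b, j⟩ := v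
  have quad : ∀ x : Fin 4, x = 0 ∨ x = 1 ∨ x = 2 ∨ x = 3 := by decide
  have hm := val_lt' hn (j - i)
  have key : ∀ a b : ℕ, a < 4 → b < 4 → f a b n ((j - i).val) = 0 → a = b ∧ (j - i).val = 0 := by
    intro a b ha hb hf
    interval_cases a <;> interval_cases b <;>
      simp only [f00, f01, f02, f03, f10, f11, f12, f13, f20, f21, f22, f23, f30, f31, f32, f33] at hf <;> omega
  obtain ⟨h1, h2⟩ := key a.val b.val a.isLt b.isLt h
  have h3 : j = i := sub_eq_zero.mp ((ZMod.val_eq_zero _).mp h2)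
  simp [Prod.ext_iff]
  exact ⟨Fin.ext h1, h3.symm⟩

lemma F_le_length (hn : 5 ≤ n) (u : Fin 4 × ZMod n) :
    ∀ {v} (p : (TGraph n).Walk v u), F n u v ≤ p.length := by
  intro v p
  induction p with
  | nil => simp [F_self hn]
  | @cons x y z h q ih =>
    have := lip hn z x y h
    simp only [SimpleGraph.Walk.length_cons]
    omega

lemma exists_walk_F (hn : 5 ≤ n) (u : Fin 4 × ZMod n) :
    ∀ (k : ℕ) (v : Fin 4 × ZMod n), F n u v = k → ∃ p : (TGraph n).Walk u v, p.length = k := by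
  intro k
  induction k with
  | zero =>
    intro v hv
    have : u = v := F_eq_zero hn hv
    subst this; exact ⟨.nil, rfl⟩
  | succ k ih =>
    intro v hv
    have hne : u ≠ v := by
      intro h; subst h; rw [F_self hn] at hv; omega
    obtain ⟨w, hadj, hFw⟩ := descent hn u v hne
    obtain ⟨p, hp⟩ := ih w (by omega)
    exact ⟨p.concat hadj.symm, by rw [SimpleGraph.Walk.length_concat, hp]⟩

lemma dist_eq_F (hn : 5 ≤ n) (u v : Fin 4 × ZMod n) :
    (TGraph n).dist u v = F n u v := by
  obtain ⟨p, hp⟩ := exists_walk_F hn u (F n u v) v rfl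
  apply le_antisymm
  · have := SimpleGraph.dist_le p; omega
  · have hr : (TGraph n).Reachable u v := ⟨p⟩
    obtain ⟨q, hq⟩ := hr.exists_walk_length_eq_dist
    have := F_le_length hn u q.reverse
    rwa [SimpleGraph.Walk.length_reverse, hq] at this

lemma f_ne_03 {c n m : ℕ} (hc : c < 4) (hn : 5 ≤ n) (hm : m < n) :
    f 0 c n m ≠ f 3 c n m := by
  interval_cases c <;> simp <;> omega

lemma f_ne_12 {c n m : ℕ} (hc : c < 4) (hn : 5 ≤ n) (hm : m < n) :
    f 1 c n m ≠ f 2 c n m := by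
  interval_cases c <;> simp <;> omega

lemma lower (hn : 5 ≤ n) (S : Finset (Fin 4 × ZMod n))
    (hS : IsDistEqSet (TGraph n) ↑S) : 2 * n ≤ S.card := by
  haveI : NeZero n := ⟨by omega⟩
  have pair1 : ∀ i : ZMod n, ((0 : Fin 4), i) ∈ S ∨ ((3 : Fin 4), i) ∈ S := by
    intro i; by_contra hcon; push_neg at hcon
    obtain ⟨x, hxS, hx⟩ := hS (0, i) (3, i) (by simpa using hcon.1) (by simpa using hcon.2)
      (by simp [Prod.ext_iff])
    rw [dist_eq_F hn, dist_eq_F hn] at hx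
    exact f_ne_03 x.1.isLt hn (val_lt' hn (x.2 - i)) hx
  have pair2 : ∀ i : ZMod n, ((1 : Fin 4), i) ∈ S ∨ ((2 : Fin 4), i) ∈ S := by
    intro i; by_contra hcon; push_neg at hcon
    obtain ⟨x, hxS, hx⟩ := hS (1, i) (2, i) (by simpa using hcon.1) (by simpa using hcon.2)
      (by simp [Prod.ext_iff])
    rw [dist_eq_F hn, dist_eq_F hn] at hx
    exact f_ne_12 x.1.isLt hn (val_lt' hn (x.2 - i)) hx
  classical
  set g : Fin 2 × ZMod n → Fin 4 × ZMod n := fun p =>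
    if p.1 = 0 then (if ((0 : Fin 4), p.2) ∈ S then ((0 : Fin 4), p.2) else ((3 : Fin 4), p.2))
    else (if ((1 : Fin 4), p.2) ∈ S then ((1 : Fin 4), p.2) else ((2 : Fin 4), p.2)) with hg
  have two : ∀ x : Fin 2, x = 0 ∨ x = 1 := by decide
  have hgS : ∀ p : Fin 2 × ZMod n, g p ∈ S := by
    rintro ⟨t, i⟩
    rcases two t with rfl | rfl
    · by_cases h0 : ((0 : Fin 4), i) ∈ S
      · simp [hg, h0]
      · have h3 := (pair1 i).resolve_left h0
        simp [hg, h0, h3]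
    · by_cases h0 : ((1 : Fin 4), i) ∈ S
      · simp [hg, h0]
      · have h3 := (pair2 i).resolve_left h0
        simp [hg, h0, h3]
  have hinj : Function.Injective g := by
    rintro ⟨s, i⟩ ⟨t, j⟩ h
    rcases two s with rfl | rfl <;> rcases two t with rfl | rfl <;>
      simp only [hg] at h <;> split_ifs at h <;>
      simp_all [Prod.ext_iff]
  calc 2 * n = Fintype.card (Fin 2 × ZMod n) := by simp [ZMod.card]
    _ = (Finset.univ : Finset (Fin 2 × ZMod n)).card := (Finset.card_univ).symm
    _ ≤ S.card := Finset.card_le_card_of_injOn g (fun p _ => hgS p) hinj.injOn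

lemma wv1 (hn : 5 ≤ n) (i : ZMod n) (c : ℕ) (hc : c < n) :
    ((i + (c : ZMod n)) - i).val = c := by
  haveI : NeZero n := ⟨by omega⟩
  rw [show i + (c : ZMod n) - i = (c : ZMod n) from by ring, ZMod.val_natCast,
    Nat.mod_eq_of_lt hc]

lemma wv2 (hn : 5 ≤ n) (i j : ZMod n) (c : ℕ) (hc : c < n) :
    ((i + (c : ZMod n)) - j).val = (c + (n - (j - i).val)) % n := by
  haveI : NeZero n := ⟨by omega⟩
  rw [show i + (c : ZMod n) - j = (c : ZMod n) - (j - i) from by ring, sub_val hn,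
    ZMod.val_natCast, Nat.mod_eq_of_lt hc]

lemma eq00 (hn : 5 ≤ n) (i j : ZMod n) (hij : i ≠ j) :
    ∃ x : Fin 4 × ZMod n, (x.1 = 1 ∨ x.1 = 3) ∧
      (TGraph n).dist (0, i) x = (TGraph n).dist (0, j) x := by
  haveI : NeZero n := ⟨by omega⟩
  have hm := val_lt' hn (j - i)
  have hm0 : (j - i).val ≠ 0 := fun h0 => hij (sub_eq_zero.mp ((ZMod.val_eq_zero _).mp h0)).symm
  by_cases hpar : (j - i).val % 2 = 1
  · refine ⟨(1, i + ((((j - i).val - 1) / 2 : ℕ) : ZMod n)), Or.inl rfl, ?_⟩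
    have hc : ((j - i).val - 1) / 2 < n := by omega
    rw [dist_eq_F hn, dist_eq_F hn]
    simp only [F, val0, val1, val2, val3, f00, f01, f02, f03, f10, f11, f12, f13, f20, f21, f22, f23, f30, f31, f32, f33]
    rw [wv1 hn i _ hc, wv2 hn i j _ hc]
    rcases mod_small_or hn (show ((j - i).val - 1) / 2 + (n - (j - i).val) < 2 * n from by omega)
      with ⟨h1, h2⟩ | h1 <;> omega
  · refine ⟨(3, i + (((j - i).val / 2 : ℕ) : ZMod n)), Or.inr rfl, ?_⟩
    have hc : (j - i).val / 2 < n := by omega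
    rw [dist_eq_F hn, dist_eq_F hn]
    simp only [F, val0, val1, val2, val3, f00, f01, f02, f03, f10, f11, f12, f13, f20, f21, f22, f23, f30, f31, f32, f33]
    rw [wv1 hn i _ hc, wv2 hn i j _ hc]
    rcases mod_small_or hn (show (j - i).val / 2 + (n - (j - i).val) < 2 * n from by omega)
      with ⟨h1, h2⟩ | h1 <;> omega

lemma eq22 (hn : 5 ≤ n) (i j : ZMod n) (hij : i ≠ j) :
    ∃ x : Fin 4 × ZMod n, (x.1 = 1 ∨ x.1 = 3) ∧
      (TGraph n).dist (2, i) x = (TGraph n).dist (2, j) x := by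
  haveI : NeZero n := ⟨by omega⟩
  have hm := val_lt' hn (j - i)
  have hm0 : (j - i).val ≠ 0 := fun h0 => hij (sub_eq_zero.mp ((ZMod.val_eq_zero _).mp h0)).symm
  by_cases hpar : (j - i).val % 2 = 0
  · refine ⟨(1, i + (((j - i).val / 2 : ℕ) : ZMod n)), Or.inl rfl, ?_⟩
    have hc : (j - i).val / 2 < n := by omega
    rw [dist_eq_F hn, dist_eq_F hn]
    simp only [F, val0, val1, val2, val3, f00, f01, f02, f03, f10, f11, f12, f13, f20, f21, f22, f23, f30, f31, f32, f33]
    rw [wv1 hn i _ hc, wv2 hn i j _ hc]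
    rcases mod_small_or hn (show (j - i).val / 2 + (n - (j - i).val) < 2 * n from by omega)
      with ⟨h1, h2⟩ | h1 <;> omega
  · refine ⟨(3, i + (((((j - i).val + 1) / 2) : ℕ) : ZMod n)), Or.inr rfl, ?_⟩
    have hc : ((j - i).val + 1) / 2 < n := by omega
    rw [dist_eq_F hn, dist_eq_F hn]
    simp only [F, val0, val1, val2, val3, f00, f01, f02, f03, f10, f11, f12, f13, f20, f21, f22, f23, f30, f31, f32, f33]
    rw [wv1 hn i _ hc, wv2 hn i j _ hc]
    rcases mod_small_or hn (show ((j - i).val + 1) / 2 + (n - (j - i).val) < 2 * n from by omega)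
      with ⟨h1, h2⟩ | h1 <;> omega

lemma eq02 (hn : 5 ≤ n) (i j : ZMod n) :
    ∃ x : Fin 4 × ZMod n, (x.1 = 1 ∨ x.1 = 3) ∧
      (TGraph n).dist (0, i) x = (TGraph n).dist (2, j) x := by
  haveI : NeZero n := ⟨by omega⟩
  have hm := val_lt' hn (j - i)
  rcases eq_or_ne ((j - i).val) 0 with hm0 | hm0
  · refine ⟨(1, i + ((0 : ℕ) : ZMod n)), Or.inl rfl, ?_⟩
    have hc : (0 : ℕ) < n := by omega
    rw [dist_eq_F hn, dist_eq_F hn]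
    simp only [F, val0, val1, val2, val3, f00, f01, f02, f03, f10, f11, f12, f13, f20, f21, f22, f23, f30, f31, f32, f33]
    rw [wv1 hn i _ hc, wv2 hn i j _ hc]
    rcases mod_small_or hn (show (0 : ℕ) + (n - (j - i).val) < 2 * n from by omega)
      with ⟨h1, h2⟩ | h1 <;> omega
  · rcases eq_or_ne ((j - i).val) (n - 1) with hm1 | hm1
    · refine ⟨(1, i + (((n - 1 : ℕ)) : ZMod n)), Or.inl rfl, ?_⟩
      have hc : (n - 1 : ℕ) < n := by omega
      rw [dist_eq_F hn, dist_eq_F hn]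
      simp only [F, val0, val1, val2, val3, f00, f01, f02, f03, f10, f11, f12, f13, f20, f21, f22, f23, f30, f31, f32, f33]
      rw [wv1 hn i _ hc, wv2 hn i j _ hc]
      rcases mod_small_or hn (show (n - 1 : ℕ) + (n - (j - i).val) < 2 * n from by omega)
        with ⟨h1, h2⟩ | h1 <;> omega
    · by_cases hpar : (j - i).val % 2 = 0
      · refine ⟨(1, i + (((j - i).val / 2 : ℕ) : ZMod n)), Or.inl rfl, ?_⟩
        have hc : (j - i).val / 2 < n := by omega
        rw [dist_eq_F hn, dist_eq_F hn]
        simp only [F, val0, val1, val2, val3, f00, f01, f02, f03, f10, f11, f12, f13, f20, f21, f22, f23, f30, f31, f32, f33]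
        rw [wv1 hn i _ hc, wv2 hn i j _ hc]
        rcases mod_small_or hn (show (j - i).val / 2 + (n - (j - i).val) < 2 * n from by omega)
          with ⟨h1, h2⟩ | h1 <;> omega
      · rcases eq_or_ne ((j - i).val) 1 with hm2 | hm2
        · by_cases hnpar : n % 2 = 0
          · refine ⟨(1, i + ((n / 2 : ℕ) : ZMod n)), Or.inl rfl, ?_⟩
            have hc : n / 2 < n := by omega
            rw [dist_eq_F hn, dist_eq_F hn]
            simp only [F, val0, val1, val2, val3, f00, f01, f02, f03, f10, f11, f12, f13, f20, f21, f22, f23, f30, f31, f32, f33]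
            rw [wv1 hn i _ hc, wv2 hn i j _ hc]
            rcases mod_small_or hn (show n / 2 + (n - (j - i).val) < 2 * n from by omega)
              with ⟨h1, h2⟩ | h1 <;> omega
          · refine ⟨(3, i + (((n + 3) / 2 : ℕ) : ZMod n)), Or.inr rfl, ?_⟩
            have hc : (n + 3) / 2 < n := by omega
            rw [dist_eq_F hn, dist_eq_F hn]
            simp only [F, val0, val1, val2, val3, f00, f01, f02, f03, f10, f11, f12, f13, f20, f21, f22, f23, f30, f31, f32, f33]
            rw [wv1 hn i _ hc, wv2 hn i j _ hc]
            rcases mod_small_or hn (show (n + 3) / 2 + (n - (j - i).val) < 2 * n from by omega)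
              with ⟨h1, h2⟩ | h1 <;> omega
        · refine ⟨(3, i + (((((j - i).val - 1) / 2) : ℕ) : ZMod n)), Or.inr rfl, ?_⟩
          have hc : ((j - i).val - 1) / 2 < n := by omega
          rw [dist_eq_F hn, dist_eq_F hn]
          simp only [F, val0, val1, val2, val3, f00, f01, f02, f03, f10, f11, f12, f13, f20, f21, f22, f23, f30, f31, f32, f33]
          rw [wv1 hn i _ hc, wv2 hn i j _ hc]
          rcases mod_small_or hn (show ((j - i).val - 1) / 2 + (n - (j - i).val) < 2 * n from by omega)
            with ⟨h1, h2⟩ | h1 <;> omega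

lemma upper (hn : 5 ≤ n) :
    ∃ S : Finset (Fin 4 × ZMod n), IsDistEqSet (TGraph n) ↑S ∧ S.card = 2 * n := by
  haveI : NeZero n := ⟨by omega⟩
  classical
  refine ⟨({1, 3} : Finset (Fin 4)) ×ˢ Finset.univ, ?_, ?_⟩
  · intro u v hu hv huv
    obtain ⟨a, i⟩ := u; obtain ⟨b, j⟩ := v
    have quad : ∀ x : Fin 4, x = 0 ∨ x = 1 ∨ x = 2 ∨ x = 3 := by decide
    have ha : a = 0 ∨ a = 2 := by
      rcases quad a with rfl | rfl | rfl | rfl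
      · exact Or.inl rfl
      · exact absurd (by simp) hu
      · exact Or.inr rfl
      · exact absurd (by simp) hu
    have hb : b = 0 ∨ b = 2 := by
      rcases quad b with rfl | rfl | rfl | rfl
      · exact Or.inl rfl
      · exact absurd (by simp) hv
      · exact Or.inr rfl
      · exact absurd (by simp) hv
    have hxmem : ∀ x : Fin 4 × ZMod n, (x.1 = 1 ∨ x.1 = 3) →
        x ∈ (↑((({1, 3} : Finset (Fin 4)) ×ˢ Finset.univ : Finset (Fin 4 × ZMod n))) : Set (Fin 4 × ZMod n)) := by
      rintro ⟨c, k⟩ (rfl | rfl) <;> simp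
    rcases ha with rfl | rfl <;> rcases hb with rfl | rfl
    · have hij : i ≠ j := fun h => huv (by rw [h])
      obtain ⟨x, hx1, hx2⟩ := eq00 hn i j hij
      exact ⟨x, hxmem x hx1, hx2⟩
    · obtain ⟨x, hx1, hx2⟩ := eq02 hn i j
      exact ⟨x, hxmem x hx1, hx2⟩
    · obtain ⟨x, hx1, hx2⟩ := eq02 hn j i
      exact ⟨x, hxmem x hx1, hx2.symm⟩
    · have hij : i ≠ j := fun h => huv (by rw [h])
      obtain ⟨x, hx1, hx2⟩ := eq22 hn i j hij
      exact ⟨x, hxmem x hx1, hx2⟩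
  · rw [Finset.card_product]
    simp [ZMod.card]

end TTn

theorem stmt14 (n : ℕ) (hn : 5 ≤ n) : eqdim (TGraph n) = 2 * n := by
  haveI : NeZero n := ⟨by omega⟩
  obtain ⟨S₀, hS₀, hcard⟩ := TTn.upper hn
  have hmem : 2 * n ∈ {k | ∃ S : Finset (Fin 4 × ZMod n), IsDistEqSet (TGraph n) ↑S ∧ S.card = k} :=
    ⟨S₀, hS₀, hcard⟩
  refine le_antisymm (Nat.sInf_le hmem) ?_
  have hmem' := Nat.sInf_mem ⟨2 * n, hmem⟩
  obtain ⟨S, hS, hSc⟩ := hmem'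
  rw [eqdim, ← hSc]
  exact TTn.lower hn S hS
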